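/- arXiv:1908.06077 — 4 statements merged into one kernel-verified Lean document; each statement's English description precedes it below -/
import Mathlib

section
/- Let d ≥ 1 and s ≥ 1 be integers, let L = (l_0, l_1, …, l_{s+1}) be any sequence of quantization levels, and let v ∈ ℝ^d be nonzero. Then the variance of the nonuniform quantization of v satisfies E[‖Q_s(v) − v‖²] = ‖v‖² · Σ_{i=1}^d τ(r_i)² · p(r_i) · (1 − p(r_i)) = ‖v‖² · Σ_{i=1}^d (l_{ℓ(r_i)+1} − r_i)(r_i − l_{ℓ(r_i)}). -/
open MeasureTheory Real

noncomputable section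

/-- The index of the quantization bin containing the normalized coordinate `r`. -/
def levIdx (l : ℕ → ℝ) (s : ℕ) (r : ℝ) : ℕ := sSup {j | j ≤ s ∧ l j ≤ r}

/-- The probability of rounding the normalized coordinate `r` up to the next level. -/
def quantP (l : ℕ → ℝ) (s : ℕ) (r : ℝ) : ℝ :=
  (r - l (levIdx l s r)) / (l (levIdx l s r + 1) - l (levIdx l s r))

/-- The (random) nonuniform quantization of `v`, driven by the uniform noise vector `u`:
coordinate `i` is `‖v‖ · sign vᵢ · hᵢ`, where `hᵢ` is the upper adjacent level with
probability `p(rᵢ)` and the lower adjacent level otherwise. -/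
def quant (l : ℕ → ℝ) (s : ℕ) {d : ℕ} (v : EuclideanSpace ℝ (Fin d))
    (u : Fin d → ℝ) : EuclideanSpace ℝ (Fin d) :=
  WithLp.toLp 2 fun i =>
    ‖v‖ * Real.sign (v i) *
      (if u i ≤ quantP l s (|v i| / ‖v‖)
       then l (levIdx l s (|v i| / ‖v‖) + 1)
       else l (levIdx l s (|v i| / ‖v‖)))

/-- The uniform probability measure on the cube `[0,1]^d`, driving the quantization noise. -/
def unifCube (d : ℕ) : Measure (Fin d → ℝ) :=
  Measure.pi fun _ => volume.restrict (Set.Icc (0:ℝ) 1)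

/-- `l` is a valid sequence of quantization levels `l 0 = 0 < l 1 < ⋯ < l (s+1) = 1`. -/
def IsLevels (l : ℕ → ℝ) (s : ℕ) : Prop :=
  l 0 = 0 ∧ l (s+1) = 1 ∧ ∀ j ≤ s, l j < l (j+1)

/- ### Auxiliary lemmas -/

instance instProbRestrict : IsProbabilityMeasure (volume.restrict (Set.Icc (0:ℝ) 1)) :=
  ⟨by simp [Real.volume_Icc]⟩

instance instProbUnifCube (d : ℕ) : IsProbabilityMeasure (unifCube d) := by
  unfold unifCube; infer_instance

lemma levels_nonneg {l : ℕ → ℝ} {s : ℕ} (hl : IsLevels l s) :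
    ∀ j ≤ s + 1, 0 ≤ l j := by
  intro j hj
  induction j with
  | zero => exact hl.1.ge
  | succ n ih =>
    have hn : n ≤ s := Nat.lt_succ_iff.mp hj
    exact le_of_lt (lt_of_le_of_lt (ih (le_trans hn (Nat.le_succ s))) (hl.2.2 n hn))

lemma levIdx_spec {l : ℕ → ℝ} {s : ℕ} (hl : IsLevels l s) {r : ℝ}
    (hr0 : 0 ≤ r) (hr1 : r ≤ 1) :
    levIdx l s r ≤ s ∧ l (levIdx l s r) ≤ r ∧ r ≤ l (levIdx l s r + 1) := by
  have hne : ({j | j ≤ s ∧ l j ≤ r} : Set ℕ).Nonempty :=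
    ⟨0, Nat.zero_le s, by rw [hl.1]; exact hr0⟩
  have hbdd : BddAbove {j | j ≤ s ∧ l j ≤ r} := ⟨s, fun j hj => hj.1⟩
  have hmem : levIdx l s r ∈ {j | j ≤ s ∧ l j ≤ r} := Nat.sSup_mem hne hbdd
  refine ⟨hmem.1, hmem.2, ?_⟩
  rcases eq_or_lt_of_le hmem.1 with he | hlt
  · rw [he]; rw [hl.2.1]; exact hr1
  · by_contra h
    push_neg at h
    have hmem' : levIdx l s r + 1 ∈ {j | j ≤ s ∧ l j ≤ r} := ⟨hlt, h.le⟩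
    have h2 : levIdx l s r + 1 ≤ levIdx l s r := le_csSup hbdd hmem'
    omega

lemma if_eq_indicator {d : ℕ} (i : Fin d) (p A B : ℝ) :
    (fun u : Fin d → ℝ => if u i ≤ p then A else B)
      = fun u => (Function.eval i ⁻¹' Set.Iic p).indicator (fun _ => A - B) u + B := by
  funext u
  by_cases h : u i ≤ p
  · have hm : u ∈ (Function.eval i ⁻¹' Set.Iic p) := h
    rw [if_pos h, Set.indicator_of_mem hm]; ring
  · have hm : u ∉ (Function.eval i ⁻¹' Set.Iic p) := h
    rw [if_neg h, Set.indicator_of_notMem hm, zero_add]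

lemma measurable_cyl {d : ℕ} (i : Fin d) (p : ℝ) :
    MeasurableSet (Function.eval i ⁻¹' Set.Iic p : Set (Fin d → ℝ)) :=
  measurable_pi_apply i measurableSet_Iic

lemma integrable_if_le {d : ℕ} (i : Fin d) (p A B : ℝ) :
    Integrable (fun u : Fin d → ℝ => if u i ≤ p then A else B) (unifCube d) := by
  rw [if_eq_indicator]
  exact ((integrable_const _).indicator (measurable_cyl i p)).add (integrable_const _)

lemma unifCube_cyl {d : ℕ} (i : Fin d) {p : ℝ} (hp0 : 0 ≤ p) (hp1 : p ≤ 1) :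
    unifCube d (Function.eval i ⁻¹' Set.Iic p) = ENNReal.ofReal p := by
  classical
  rw [unifCube, Set.eval_preimage, Measure.pi_pi]
  rw [Finset.prod_eq_single i]
  · rw [Function.update_self, Measure.restrict_apply measurableSet_Iic]
    have : Set.Iic p ∩ Set.Icc (0:ℝ) 1 = Set.Icc (0:ℝ) p := by
      ext x
      simp only [Set.mem_inter_iff, Set.mem_Iic, Set.mem_Icc]
      constructor
      · rintro ⟨h1, h2, _⟩; exact ⟨h2, h1⟩
      · rintro ⟨h1, h2⟩; exact ⟨h2, h1, le_trans h2 hp1⟩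
    rw [this, Real.volume_Icc, sub_zero]
  · intro j _ hj
    rw [Function.update_of_ne hj]
    simp [Real.volume_Icc]
  · intro h
    exact absurd (Finset.mem_univ i) h

lemma integral_if_le {d : ℕ} (i : Fin d) {p : ℝ} (A B : ℝ) (hp0 : 0 ≤ p) (hp1 : p ≤ 1) :
    ∫ u, (if u i ≤ p then A else B) ∂(unifCube d) = p * A + (1 - p) * B := by
  rw [if_eq_indicator]
  rw [integral_add ((integrable_const _).indicator (measurable_cyl i p)) (integrable_const _)]
  rw [integral_indicator_const _ (measurable_cyl i p), integral_const]
  rw [measureReal_def, measureReal_def, unifCube_cyl i hp0 hp1]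
  simp only [measure_univ, ENNReal.toReal_one, one_smul, smul_eq_mul,
    ENNReal.toReal_ofReal hp0]
  ring

/-- **Variance identity for nonuniform quantization** (Lemma on the variance of `Q_s(v)`):
for any levels `L` and nonzero `v ∈ ℝ^d`,
`E[‖Q_s(v) − v‖²] = ‖v‖² Σᵢ τ(rᵢ)² p(rᵢ)(1 − p(rᵢ)) = ‖v‖² Σᵢ (l_{ℓ(rᵢ)+1} − rᵢ)(rᵢ − l_{ℓ(rᵢ)})`. -/
theorem variance_identity (d s : ℕ) (hd : 1 ≤ d) (hs : 1 ≤ s)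
    (l : ℕ → ℝ) (hl : IsLevels l s)
    (v : EuclideanSpace ℝ (Fin d)) (hv : v ≠ 0) :
    (∫ u, ‖quant l s v u - v‖ ^ 2 ∂(unifCube d)) =
      ‖v‖ ^ 2 * ∑ i, (l (levIdx l s (|v i| / ‖v‖) + 1) - l (levIdx l s (|v i| / ‖v‖))) ^ 2 *
        quantP l s (|v i| / ‖v‖) * (1 - quantP l s (|v i| / ‖v‖)) ∧
    (∫ u, ‖quant l s v u - v‖ ^ 2 ∂(unifCube d)) =
      ‖v‖ ^ 2 * ∑ i, (l (levIdx l s (|v i| / ‖v‖) + 1) - |v i| / ‖v‖) *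
        (|v i| / ‖v‖ - l (levIdx l s (|v i| / ‖v‖))) := by
  classical
  have hN : (0:ℝ) < ‖v‖ := norm_pos_iff.mpr hv
  have hcoord : ∀ i, |v i| ≤ ‖v‖ := by
    intro i
    have hle : |v i| ^ 2 ≤ ∑ j, ‖v j‖ ^ 2 := by
      have := Finset.single_le_sum (f := fun j => ‖v j‖ ^ 2)
        (fun j _ => sq_nonneg _) (Finset.mem_univ i)
      simpa [Real.norm_eq_abs] using this
    calc |v i| = Real.sqrt (|v i| ^ 2) := (Real.sqrt_sq (abs_nonneg _)).symm
      _ ≤ Real.sqrt (∑ j, ‖v j‖ ^ 2) := Real.sqrt_le_sqrt hle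
      _ = ‖v‖ := (EuclideanSpace.norm_eq v).symm
  have hr0 : ∀ i, (0:ℝ) ≤ |v i| / ‖v‖ := fun i => div_nonneg (abs_nonneg _) hN.le
  have hr1 : ∀ i, |v i| / ‖v‖ ≤ 1 := fun i => (div_le_one hN).mpr (hcoord i)
  have hspec : ∀ i : Fin d, levIdx l s (|v i| / ‖v‖) ≤ s ∧
      l (levIdx l s (|v i| / ‖v‖)) ≤ |v i| / ‖v‖ ∧
      |v i| / ‖v‖ ≤ l (levIdx l s (|v i| / ‖v‖) + 1) :=
    fun i => levIdx_spec hl (hr0 i) (hr1 i)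
  have hτ : ∀ i : Fin d, 0 < l (levIdx l s (|v i| / ‖v‖) + 1) - l (levIdx l s (|v i| / ‖v‖)) :=
    fun i => sub_pos.mpr (hl.2.2 _ (hspec i).1)
  have hτ' : ∀ i : Fin d, l (levIdx l s (|v i| / ‖v‖) + 1) - l (levIdx l s (|v i| / ‖v‖)) ≠ 0 :=
    fun i => ne_of_gt (hτ i)
  have hp0 : ∀ i, 0 ≤ quantP l s (|v i| / ‖v‖) :=
    fun i => div_nonneg (sub_nonneg.mpr (hspec i).2.1) (hτ i).le
  have hp1 : ∀ i, quantP l s (|v i| / ‖v‖) ≤ 1 := by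
    intro i
    rw [quantP, div_le_one (hτ i)]
    linarith [(hspec i).2.2]
  -- rewrite the squared norm as a sum
  have hnorm : ∀ u, ‖quant l s v u - v‖ ^ 2 = ∑ i, (quant l s v u i - v i) ^ 2 := by
    intro u
    rw [EuclideanSpace.norm_eq, Real.sq_sqrt (Finset.sum_nonneg fun i _ => sq_nonneg _)]
    exact Finset.sum_congr rfl fun i _ => by
      rw [show (quant l s v u - v) i = quant l s v u i - v i from rfl,
        Real.norm_eq_abs, sq_abs]
  have hfun : ∀ (u : Fin d → ℝ) (i : Fin d), (quant l s v u i - v i) ^ 2 =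
      (if u i ≤ quantP l s (|v i| / ‖v‖)
        then (‖v‖ * Real.sign (v i) * l (levIdx l s (|v i| / ‖v‖) + 1) - v i) ^ 2
        else (‖v‖ * Real.sign (v i) * l (levIdx l s (|v i| / ‖v‖)) - v i) ^ 2) := by
    intro u i
    rw [show quant l s v u i = ‖v‖ * Real.sign (v i) *
      (if u i ≤ quantP l s (|v i| / ‖v‖)
       then l (levIdx l s (|v i| / ‖v‖) + 1)
       else l (levIdx l s (|v i| / ‖v‖))) from by simp [quant]]
    split_ifs <;> rfl
  have hmain : (∫ u, ‖quant l s v u - v‖ ^ 2 ∂(unifCube d)) =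
      ∑ i, (quantP l s (|v i| / ‖v‖) *
              (‖v‖ * Real.sign (v i) * l (levIdx l s (|v i| / ‖v‖) + 1) - v i) ^ 2 +
            (1 - quantP l s (|v i| / ‖v‖)) *
              (‖v‖ * Real.sign (v i) * l (levIdx l s (|v i| / ‖v‖)) - v i) ^ 2) := by
    simp only [hnorm, hfun]
    rw [integral_finset_sum _ (fun i _ => integrable_if_le i _ _ _)]
    exact Finset.sum_congr rfl fun i _ => integral_if_le i _ _ (hp0 i) (hp1 i)
  -- per-coordinate identity (first form)
  have hterm : ∀ i : Fin d,
      quantP l s (|v i| / ‖v‖) *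
          (‖v‖ * Real.sign (v i) * l (levIdx l s (|v i| / ‖v‖) + 1) - v i) ^ 2 +
        (1 - quantP l s (|v i| / ‖v‖)) *
          (‖v‖ * Real.sign (v i) * l (levIdx l s (|v i| / ‖v‖)) - v i) ^ 2 =
      ‖v‖ ^ 2 * ((l (levIdx l s (|v i| / ‖v‖) + 1) - l (levIdx l s (|v i| / ‖v‖))) ^ 2 *
        quantP l s (|v i| / ‖v‖) * (1 - quantP l s (|v i| / ‖v‖))) := by
    intro i
    have hτi : l (levIdx l s (|v i| / ‖v‖) + 1) - l (levIdx l s (|v i| / ‖v‖)) ≠ 0 := hτ' i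
    rcases eq_or_ne (v i) 0 with h0 | h0
    · have hr : |v i| / ‖v‖ = 0 := by rw [h0, abs_zero, zero_div]
      have hlk : l (levIdx l s (|v i| / ‖v‖)) = 0 :=
        le_antisymm ((hspec i).2.1.trans (le_of_eq hr))
          (levels_nonneg hl _ (Nat.le_succ_of_le (hspec i).1))
      have hp : quantP l s (|v i| / ‖v‖) = 0 := by
        rw [quantP, hlk, sub_zero, hr, zero_div]
      rw [hp, h0]
      simp
    · have hs2 : Real.sign (v i) ^ 2 = 1 := by
        rcases Real.sign_apply_eq_of_ne_zero _ h0 with h | h <;> rw [h] <;> norm_num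
      have hvN : v i = Real.sign (v i) * (‖v‖ * (|v i| / ‖v‖)) := by
        rw [mul_div_cancel₀ _ (ne_of_gt hN)]
        rcases lt_trichotomy (v i) 0 with h | h | h
        · rw [Real.sign_of_neg h, abs_of_neg h]; ring
        · exact absurd h h0
        · rw [Real.sign_of_pos h, abs_of_pos h]; ring
      rw [quantP]
      generalize hgr : |v i| / ‖v‖ = r at hvN hτi ⊢
      generalize hgs : Real.sign (v i) = sg at hvN hs2 ⊢
      generalize hg1 : l (levIdx l s r + 1) = L1 at hτi ⊢
      generalize hg0 : l (levIdx l s r) = L0 at hτi ⊢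
      rw [hvN]
      have e1 : (‖v‖ * sg * L1 - sg * (‖v‖ * r)) ^ 2 = (‖v‖ * L1 - ‖v‖ * r) ^ 2 := by
        linear_combination (‖v‖ * L1 - ‖v‖ * r) ^ 2 * hs2
      have e0 : (‖v‖ * sg * L0 - sg * (‖v‖ * r)) ^ 2 = (‖v‖ * L0 - ‖v‖ * r) ^ 2 := by
        linear_combination (‖v‖ * L0 - ‖v‖ * r) ^ 2 * hs2
      rw [e1, e0]
      field_simp
      ring
  refine ⟨?_, ?_⟩
  · rw [hmain, Finset.mul_sum]
    exact Finset.sum_congr rfl fun i _ => hterm i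
  · rw [hmain, Finset.mul_sum]
    refine Finset.sum_congr rfl fun i _ => ?_
    rw [hterm i]
    congr 1
    rw [quantP]
    field_simp [hτ' i]
    ring
end
end

section
/- Let d ≥ 1 and s ≥ 1 be integers with 2^{2s} ≤ d, and let v ∈ ℝ^d be nonzero. The nonuniform quantization of v with the NUQSGD levels L̂ satisfies E[‖Q_s(v) − v‖²] ≤ ‖v‖² · ( min{ 2^{−2s}(d − 2^{2s})/4 , 2^{−s}·√(d − 2^{2s}) } + 3(s−1)/16 + 1/4 ). -/
open MeasureTheory Real

noncomputable section

/-- The exponentially spaced NUQSGD levels `(0, 2^{-s}, 2^{1-s}, …, 2^{-1}, 1)`: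
`l 0 = 0` and `l j = 2^{j-1-s}` for `j = 1, …, s+1`. -/
def nuqLevels (s : ℕ) : ℕ → ℝ :=
  fun j => if j = 0 then 0 else 2 ^ ((j : ℤ) - 1 - (s : ℤ))

lemma step_integral (p C1 C2 : ℝ) (h0 : 0 ≤ p) (h1 : p ≤ 1) :
    ∫ t in Set.Icc (0:ℝ) 1, (if t ≤ p then C1 else C2) = p * C1 + (1-p) * C2 := by
  have hU : Set.Icc (0:ℝ) p ∪ Set.Ioc p 1 = Set.Icc 0 1 := Set.Icc_union_Ioc_eq_Icc h0 h1
  have hdisj : Disjoint (Set.Icc (0:ℝ) p) (Set.Ioc p 1) := by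
    apply Set.disjoint_left.2
    rintro t ⟨_, h2⟩ ⟨h3, _⟩; exact absurd h2 (not_le.2 h3)
  have hfin1 : volume (Set.Icc (0:ℝ) p) ≠ ⊤ := by simp [Real.volume_Icc]
  have hfin2 : volume (Set.Ioc (0:ℝ) 1) ≠ ⊤ := by simp [Real.volume_Ioc]
  have e1 : ∀ t ∈ Set.Icc (0:ℝ) p, (if t ≤ p then C1 else C2) = C1 := fun t ht => if_pos ht.2
  have e2 : ∀ t ∈ Set.Ioc (p:ℝ) 1, (if t ≤ p then C1 else C2) = C2 := fun t ht =>
    if_neg (not_le.2 ht.1)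
  have i1 : IntegrableOn (fun t => if t ≤ p then C1 else C2) (Set.Icc (0:ℝ) p) volume := by
    apply (integrableOn_const ?_).congr_fun (fun t ht => (e1 t ht).symm) measurableSet_Icc
    · simp [Real.volume_Icc]
  have i2 : IntegrableOn (fun t => if t ≤ p then C1 else C2) (Set.Ioc (p:ℝ) 1) volume := by
    apply (integrableOn_const ?_).congr_fun (fun t ht => (e2 t ht).symm) measurableSet_Ioc
    · simp [Real.volume_Ioc]
  rw [← hU, setIntegral_union hdisj measurableSet_Ioc i1 i2,
    setIntegral_congr_fun measurableSet_Icc e1, setIntegral_congr_fun measurableSet_Ioc e2,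
    setIntegral_const, setIntegral_const]
  rw [Real.volume_real_Icc_of_le h0, Real.volume_real_Ioc_of_le h1]
  simp [sub_zero, smul_eq_mul]

instance : IsProbabilityMeasure (volume.restrict (Set.Icc (0:ℝ) 1)) :=
  ⟨by rw [Measure.restrict_apply_univ, Real.volume_Icc]; norm_num⟩

instance (d : ℕ) : IsProbabilityMeasure (unifCube d) := by
  unfold unifCube; infer_instance

lemma measurePreserving_eval (d : ℕ) (i : Fin d) :
    MeasurePreserving (Function.eval i) (unifCube d) (volume.restrict (Set.Icc (0:ℝ) 1)) := by
  refine ⟨measurable_pi_apply i, ?_⟩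
  ext A hA
  rw [Measure.map_apply (measurable_pi_apply i) hA, show (Function.eval i ⁻¹' A : Set (Fin d → ℝ)) = Set.univ.pi (Function.update (fun _ => Set.univ) i A) from Set.eval_preimage]
  rw [unifCube, Measure.pi_pi]
  rw [Finset.prod_eq_single i (fun j _ hj => by rw [Function.update_of_ne hj]; simp) (by simp)]
  rw [Function.update_self]

lemma integral_eval (d : ℕ) (i : Fin d) (g : ℝ → ℝ) (hg : AEStronglyMeasurable g (volume.restrict (Set.Icc (0:ℝ) 1))) :
    ∫ u, g (u i) ∂(unifCube d) = ∫ t in Set.Icc (0:ℝ) 1, g t := by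
  rw [← (measurePreserving_eval d i).map_eq,
    integral_map (measurable_pi_apply i).aemeasurable (by rwa [(measurePreserving_eval d i).map_eq])]

lemma abs_coord_le (d : ℕ) (v : EuclideanSpace ℝ (Fin d)) (i : Fin d) : |v i| ≤ ‖v‖ := by
  rw [EuclideanSpace.norm_eq]
  rw [show |v i| = Real.sqrt (|v i|^2) from (Real.sqrt_sq (abs_nonneg _)).symm]
  apply Real.sqrt_le_sqrt
  rw [sq_abs]
  have : (v i)^2 = ‖v i‖^2 := by rw [Real.norm_eq_abs, sq_abs]
  rw [this]
  exact Finset.single_le_sum (f := fun j => ‖v j‖^2) (fun j _ => by positivity) (Finset.mem_univ i)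

lemma sign_mul_abs' (r : ℝ) : Real.sign r * |r| = r := by
  rcases lt_trichotomy r 0 with h | h | h
  · rw [Real.sign_of_neg h, abs_of_neg h]; ring
  · simp [h]
  · rw [Real.sign_of_pos h, abs_of_pos h]; ring

lemma nuq_zero (s : ℕ) : nuqLevels s 0 = 0 := if_pos rfl

lemma nuq_succ (s j : ℕ) : nuqLevels s (j+1) = 2 ^ ((j:ℤ) - (s:ℤ)) := by
  simp only [nuqLevels, Nat.succ_ne_zero, if_false]
  congr 1
  push_cast; ring

lemma nuq_nonneg (s j : ℕ) : 0 ≤ nuqLevels s j := by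
  unfold nuqLevels; split
  · exact le_refl 0
  · positivity

lemma levIdx_spec_s2 (s : ℕ) (r : ℝ) (hr : 0 ≤ r) :
    levIdx (nuqLevels s) s r ≤ s ∧ nuqLevels s (levIdx (nuqLevels s) s r) ≤ r := by
  have h0 : 0 ∈ {j | j ≤ s ∧ nuqLevels s j ≤ r} := ⟨Nat.zero_le _, by rw [nuq_zero]; exact hr⟩
  have hbdd : BddAbove {j | j ≤ s ∧ nuqLevels s j ≤ r} := ⟨s, fun j hj => hj.1⟩
  exact Nat.sSup_mem ⟨0, h0⟩ hbdd

lemma le_levIdx_succ (s : ℕ) (r : ℝ) (hr0 : 0 ≤ r) (hr1 : r ≤ 1) :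
    r ≤ nuqLevels s (levIdx (nuqLevels s) s r + 1) := by
  have hbdd : BddAbove {j | j ≤ s ∧ nuqLevels s j ≤ r} := ⟨s, fun j hj => hj.1⟩
  set J := levIdx (nuqLevels s) s r with hJ
  have hJs : J ≤ s := (levIdx_spec_s2 s r hr0).1
  rcases eq_or_lt_of_le hJs with heq | hlt
  · rw [heq, nuq_succ]; simpa using hr1
  · by_contra hc
    push_neg at hc
    have : J + 1 ∈ {j | j ≤ s ∧ nuqLevels s j ≤ r} := ⟨hlt, hc.le⟩
    have h2 := le_csSup hbdd this
    have h3 : J + 1 ≤ J := by rw [hJ, levIdx]; exact h2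
    omega

-- positivity of levels for j ≥ 1, to conclude levIdx r = 0 when r = 0? and a < b
lemma nuq_lt_succ (s j : ℕ) : nuqLevels s j < nuqLevels s (j+1) := by
  rcases Nat.eq_zero_or_pos j with rfl | hj
  · rw [nuq_zero, nuq_succ]; positivity
  · obtain ⟨k, rfl⟩ := Nat.exists_eq_add_of_le' hj
    rw [nuq_succ, show k + 1 + 1 = (k+1) + 1 from rfl, nuq_succ]
    apply zpow_lt_zpow_right₀ (by norm_num)
    push_cast; omega

lemma pow2_sq (n : ℕ) : ((2:ℝ)^n)^2 = 4^n := by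
  rw [← pow_mul, mul_comm, pow_mul]; norm_num

lemma aux_pow (s k : ℕ) (hk : k + 1 ≤ s) : (4:ℝ)^k ≤ 1 + 3*((s:ℝ)-1)/4 * 4^k := by
  have hs4 : (k:ℝ) + 1 ≤ s := by exact_mod_cast hk
  match k with
  | 0 => simp; nlinarith
  | 1 => push_cast at hs4 ⊢; nlinarith
  | (m+2) =>
    have h4 : (0:ℝ) < (4:ℝ)^(m+2) := by positivity
    have hc : (1:ℝ) ≤ 3*((s:ℝ)-1)/4 := by push_cast at hs4; nlinarith
    nlinarith

lemma var_bin0 (s : ℕ) (r : ℝ)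
    (h : levIdx (nuqLevels s) s r = 0) :
    (r - nuqLevels s (levIdx (nuqLevels s) s r)) * (nuqLevels s (levIdx (nuqLevels s) s r + 1) - r)
      = (2:ℝ)^(-(s:ℤ)) * r - r^2 := by
  rw [h, nuq_zero, show (0:ℕ)+1 = 1 from rfl, show (nuqLevels s 1) = 2^((0:ℤ)-(s:ℤ)) from nuq_succ s 0]
  rw [show (0:ℤ) - (s:ℤ) = -(s:ℤ) by ring]
  ring

lemma var_le_quarter (r A B : ℝ) :
    (r - A) * (B - r) ≤ (B - A)^2 / 4 := by nlinarith [sq_nonneg (r - A - (B - r))]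

lemma nuq_gap (s k : ℕ) :
    nuqLevels s ((k+1)+1) - nuqLevels s (k+1) = nuqLevels s (k+1) := by
  rw [nuq_succ, nuq_succ, show (((k+1:ℕ)):ℤ) - (s:ℤ) = ((k:ℤ)-(s:ℤ)) + 1 by push_cast; ring]
  rw [zpow_add_one₀ (by norm_num : (2:ℝ) ≠ 0)]
  ring

lemma var_bin_pos (s : ℕ) (r : ℝ) (hr0 : 0 ≤ r) (hr1 : r ≤ 1)
    (h : levIdx (nuqLevels s) s r ≠ 0) :
    (r - nuqLevels s (levIdx (nuqLevels s) s r)) * (nuqLevels s (levIdx (nuqLevels s) s r + 1) - r)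
      ≤ r^2 / 4 := by
  obtain ⟨k, hk⟩ := Nat.exists_eq_succ_of_ne_zero h
  have hAr := (levIdx_spec_s2 s r hr0).2
  have hA0 := nuq_nonneg s (levIdx (nuqLevels s) s r)
  have hBA : nuqLevels s (levIdx (nuqLevels s) s r + 1) - nuqLevels s (levIdx (nuqLevels s) s r)
      = nuqLevels s (levIdx (nuqLevels s) s r) := by
    rw [hk]; exact nuq_gap s k
  have h1 := var_le_quarter r (nuqLevels s (levIdx (nuqLevels s) s r))
    (nuqLevels s (levIdx (nuqLevels s) s r + 1))
  rw [hBA] at h1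
  nlinarith

lemma two_nsq (s : ℕ) : ((2:ℝ)^(-(2*(s:ℤ)))) = ((4:ℝ)^s)⁻¹ := by
  rw [zpow_neg, show (2*(s:ℤ)) = ((2*s:ℕ):ℤ) by push_cast; ring, zpow_natCast, pow_mul]
  norm_num

lemma var_all (s : ℕ) (hs : 1 ≤ s) (r : ℝ) (hr0 : 0 ≤ r) (hr1 : r ≤ 1) :
    (r - nuqLevels s (levIdx (nuqLevels s) s r)) * (nuqLevels s (levIdx (nuqLevels s) s r + 1) - r)
      ≤ (2:ℝ)^(-(2*(s:ℤ)))/4 + 3*((s:ℝ)-1)/16 * r^2 := by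
  have hs1 : (1:ℝ) ≤ (s:ℝ) := by exact_mod_cast hs
  rw [two_nsq]
  have h4s : (0:ℝ) < (4:ℝ)^s := by positivity
  by_cases h : levIdx (nuqLevels s) s r = 0
  · rw [var_bin0 s r h]
    have hB : (2:ℝ)^(-(s:ℤ)) = ((2:ℝ)^s)⁻¹ := by rw [zpow_neg, zpow_natCast]
    rw [hB]
    have h4 : ((4:ℝ)^s) = ((2:ℝ)^s)^2 := (pow2_sq s).symm
    have hw : (0:ℝ) < (2:ℝ)^s := by positivity
    have hinv : ((4:ℝ)^s)⁻¹ = ((2:ℝ)^s)⁻¹^2 := by rw [h4, inv_pow]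
    rw [hinv]
    nlinarith [sq_nonneg (((2:ℝ)^s)⁻¹/2 - r), sq_nonneg r]
  · obtain ⟨k, hk⟩ := Nat.exists_eq_succ_of_ne_zero h
    have hks : k + 1 ≤ s := by have := (levIdx_spec_s2 s r hr0).1; omega
    have hAr := (levIdx_spec_s2 s r hr0).2
    have hA0 := nuq_nonneg s (levIdx (nuqLevels s) s r)
    have hBA : nuqLevels s (levIdx (nuqLevels s) s r + 1) - nuqLevels s (levIdx (nuqLevels s) s r)
        = nuqLevels s (levIdx (nuqLevels s) s r) := by rw [hk]; exact nuq_gap s k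
    have h1 := var_le_quarter r (nuqLevels s (levIdx (nuqLevels s) s r))
      (nuqLevels s (levIdx (nuqLevels s) s r + 1))
    rw [hBA] at h1
    -- A^2 = 4^k / 4^s
    have hAv : nuqLevels s (levIdx (nuqLevels s) s r) = (2:ℝ)^k / (2:ℝ)^s := by
      rw [hk, nuq_succ, zpow_sub₀ (by norm_num : (2:ℝ) ≠ 0), zpow_natCast, zpow_natCast]
    have hA2 : (nuqLevels s (levIdx (nuqLevels s) s r))^2 = (4:ℝ)^k / (4:ℝ)^s := by
      rw [hAv, div_pow, pow2_sq, pow2_sq]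
    have haux := aux_pow s k hks
    have h4k : (0:ℝ) < (4:ℝ)^k := by positivity
    -- A²/4 ≤ (4^s)⁻¹/4 + 3(s-1)/16 A²  and  A² ≤ r²
    have hr2 : (nuqLevels s (levIdx (nuqLevels s) s r))^2 ≤ r^2 := by nlinarith
    have hmain : (nuqLevels s (levIdx (nuqLevels s) s r))^2/4
        ≤ ((4:ℝ)^s)⁻¹/4 + 3*((s:ℝ)-1)/16 * (nuqLevels s (levIdx (nuqLevels s) s r))^2 := by
      rw [hA2]
      have hkey := mul_le_mul_of_nonneg_right haux (inv_nonneg.2 h4s.le)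
      rw [div_eq_mul_inv ((4:ℝ)^k)]
      nlinarith [hkey]
    nlinarith

set_option maxHeartbeats 2000000 in
lemma main_ineq (d s : ℕ) (hs : 1 ≤ s) (hd : (2:ℝ)^(2*s) ≤ (d:ℝ))
    (r V : Fin d → ℝ)
    (hsum : ∑ i, (r i)^2 = 1)
    (hr0 : ∀ i, 0 ≤ r i)
    (hbin0 : ∀ i, levIdx (nuqLevels s) s (r i) = 0 → V i = (2:ℝ)^(-(s:ℤ)) * r i - (r i)^2)
    (hbin : ∀ i, levIdx (nuqLevels s) s (r i) ≠ 0 → V i ≤ (r i)^2/4)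
    (hall : ∀ i, V i ≤ (2:ℝ)^(-(2*(s:ℤ)))/4 + 3*((s:ℝ)-1)/16 * (r i)^2) :
    ∑ i, V i ≤
      min ((2:ℝ) ^ (-(2 * (s:ℤ))) * ((d:ℝ) - 2 ^ (2 * s)) / 4)
          ((2:ℝ) ^ (-(s:ℤ)) * Real.sqrt ((d:ℝ) - 2 ^ (2 * s))) +
        3 * ((s:ℝ) - 1) / 16 + 1 / 4 := by
  have hs1 : (1:ℝ) ≤ (s:ℝ) := by exact_mod_cast hs
  set w : ℝ := (2:ℝ)^s with hwdef
  have hw0 : (0:ℝ) < w := by positivity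
  have hw2 : (2:ℝ)^(2*s) = w^2 := by rw [hwdef, ← pow_mul, mul_comm]
  have hwn : (2:ℝ)^(-(s:ℤ)) = w⁻¹ := by rw [zpow_neg, zpow_natCast]
  have hwn2 : (2:ℝ)^(-(2*(s:ℤ))) = (w^2)⁻¹ := by
    rw [zpow_neg, show (2*(s:ℤ)) = ((2*s:ℕ):ℤ) by push_cast; ring, zpow_natCast, hw2]
  have hdw : w^2 ≤ (d:ℝ) := by rw [← hw2]; exact hd
  set z : ℝ := Real.sqrt ((d:ℝ) - 2^(2*s)) with hzdef
  have hz0 : 0 ≤ z := Real.sqrt_nonneg _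
  have hz2 : z^2 = (d:ℝ) - w^2 := by rw [hzdef, Real.sq_sqrt (by rw [hw2] at *; linarith), hw2]
  set X : ℝ := (2:ℝ)^(-(2*(s:ℤ))) * ((d:ℝ) - 2^(2*s)) / 4 with hXdef
  set Y : ℝ := (2:ℝ)^(-(s:ℤ)) * z with hYdef
  have hXv : X = (w^2)⁻¹ * ((d:ℝ) - w^2) / 4 := by rw [hXdef, hwn2, hw2]
  have hYv : Y = w⁻¹ * z := by rw [hYdef, hwn]
  have hXz : X = (w^2)⁻¹ * z^2/4 := by rw [hXv, ← hz2]
  rcases le_or_gt X Y with hXY | hXY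
  · -- branch 1: min = X, use hall
    rw [min_eq_left hXY]
    have step : ∑ i, V i ≤ ∑ i, ((2:ℝ)^(-(2*(s:ℤ)))/4 + 3*((s:ℝ)-1)/16 * (r i)^2) :=
      Finset.sum_le_sum (fun i _ => hall i)
    rw [Finset.sum_add_distrib, Finset.sum_const, ← Finset.mul_sum, hsum] at step
    simp only [Finset.card_univ, Fintype.card_fin, nsmul_eq_mul] at step
    have : (d:ℝ) * ((2:ℝ)^(-(2*(s:ℤ)))/4) = X + 1/4 := by
      rw [hXv, hwn2]
      field_simp
      ring
    rw [this] at step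
    linarith
  · -- branch 2: min = Y
    rw [min_eq_right hXY.le]
    rw [hXz, hYv] at hXY
    have hzpos : 0 < z := by
      rcases hz0.eq_or_lt with h | h
      · exfalso; rw [← h] at hXY; simp at hXY
      · exact h
    have hz4w : 4*w < z := by
      have h1 : w⁻¹ * z * (4 * w^2) < (w^2)⁻¹ * z^2/4 * (4*w^2) :=
        mul_lt_mul_of_pos_right hXY (by positivity)
      have h2 : w⁻¹ * z * (4*w^2) = 4*w*z := by field_simp
      have h3 : (w^2)⁻¹ * z^2/4 * (4*w^2) = z^2 := by field_simp
      rw [h2, h3] at h1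
      nlinarith
    have hd17 : 17 * w^2 ≤ (d:ℝ) := by nlinarith
    classical
    set B : Finset (Fin d) := Finset.univ.filter (fun i => levIdx (nuqLevels s) s (r i) = 0) with hBdef
    have hmemB : ∀ i, i ∈ B ↔ levIdx (nuqLevels s) s (r i) = 0 := by
      intro i; rw [hBdef, Finset.mem_filter]; simp
    set ρ : ℝ := ∑ i ∈ B, (r i)^2 with hρdef
    set S : ℝ := ∑ i ∈ B, r i with hSdef
    have hsplit : ρ + ∑ i ∈ Bᶜ, (r i)^2 = 1 := by
      rw [hρdef, Finset.sum_add_sum_compl, hsum]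
    have hρ0 : 0 ≤ ρ := Finset.sum_nonneg (fun i _ => sq_nonneg _)
    have hρ1 : ρ ≤ 1 := by
      have : (0:ℝ) ≤ ∑ i ∈ Bᶜ, (r i)^2 := Finset.sum_nonneg (fun i _ => sq_nonneg _)
      linarith
    have hS0 : 0 ≤ S := Finset.sum_nonneg (fun i _ => hr0 i)
    have hS2 : S^2 ≤ (d:ℝ) * ρ := by
      have h1 : S^2 ≤ (B.card : ℝ) * ρ := by
        have := sq_sum_le_card_mul_sum_sq (s := B) (f := r)
        exact_mod_cast this
      have h2 : (B.card : ℝ) ≤ (d:ℝ) := by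
        have h3 : B.card ≤ d := by
          have := Finset.card_le_card (Finset.subset_univ B)
          simpa using this
        exact_mod_cast h3
      nlinarith
    have hVsum : ∑ i, V i ≤ w⁻¹ * S - ρ + (1-ρ)/4 := by
      have hBsum : ∑ i ∈ B, V i = w⁻¹ * S - ρ := by
        rw [hSdef, hρdef, Finset.mul_sum, ← Finset.sum_sub_distrib]
        apply Finset.sum_congr rfl
        intro i hi
        rw [hbin0 i ((hmemB i).1 hi), hwn]
      have hCsum : ∑ i ∈ Bᶜ, V i ≤ (1 - ρ) * (1/4) := by
        have e1 : (1 - ρ) = ∑ i ∈ Bᶜ, (r i)^2 := by linarith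
        rw [e1, Finset.sum_mul]
        apply Finset.sum_le_sum
        intro i hi
        have : ¬ (levIdx (nuqLevels s) s (r i) = 0) := by
          rw [Finset.mem_compl, hmemB] at hi; exact hi
        have := hbin i this
        linarith
      have := Finset.sum_add_sum_compl B V
      linarith
    rcases le_or_gt ((d:ℝ)*ρ) ((d:ℝ) - w^2) with hcase | hcase
    · have hSz : S ≤ z := by nlinarith
      have : w⁻¹ * S ≤ Y := by rw [hYv]; exact mul_le_mul_of_nonneg_left hSz (by positivity)
      linarith
    · have h17 : 1 - ρ ≤ 1/17 := by nlinarith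
      have hSzw : S ≤ z + w := by nlinarith
      have : w⁻¹ * S ≤ Y + 1 := by
        rw [hYv]
        have h5 := mul_le_mul_of_nonneg_left hSzw (le_of_lt (inv_pos.2 hw0))
        rw [mul_add, inv_mul_cancel₀ hw0.ne'] at h5
        linarith
      linarith

lemma pvar_algebra (N r A Bl : ℝ) (hAB : A < Bl) :
    (r - A)/(Bl - A) * (N^2 * (Bl - r)^2) + (1 - (r-A)/(Bl-A)) * (N^2 * (A - r)^2)
      = N^2 * ((r - A) * (Bl - r)) := by
  have h : Bl - A ≠ 0 := by linarith
  field_simp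
  ring

section
variable (s d : ℕ) (v : EuclideanSpace ℝ (Fin d)) (hv : v ≠ 0) (i : Fin d)

lemma coord_stuff (hv : v ≠ 0) (i : Fin d) :
    Integrable (fun u => (quant (nuqLevels s) s v u i - v i)^2) (unifCube d) ∧
    (∫ u, (quant (nuqLevels s) s v u i - v i)^2 ∂(unifCube d))
      = ‖v‖^2 * ((|v i| / ‖v‖ - nuqLevels s (levIdx (nuqLevels s) s (|v i| / ‖v‖)))
          * (nuqLevels s (levIdx (nuqLevels s) s (|v i| / ‖v‖) + 1) - |v i| / ‖v‖)) := by
  have hN : (0:ℝ) < ‖v‖ := norm_pos_iff.2 hv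
  set r : ℝ := |v i| / ‖v‖ with hr
  have hr0 : 0 ≤ r := by positivity
  have hr1 : r ≤ 1 := (div_le_one hN).2 (abs_coord_le d v i)
  set J := levIdx (nuqLevels s) s r with hJ
  set A := nuqLevels s J with hA
  set Bl := nuqLevels s (J+1) with hB
  have hAr : A ≤ r := (levIdx_spec_s2 s r hr0).2
  have hrB : r ≤ Bl := le_levIdx_succ s r hr0 hr1
  have hAB : A < Bl := nuq_lt_succ s J
  set p := quantP (nuqLevels s) s r with hp
  have hpval : p = (r - A) / (Bl - A) := rfl
  have hp0 : 0 ≤ p := by rw [hpval]; apply div_nonneg <;> linarith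
  have hp1 : p ≤ 1 := by rw [hpval]; apply (div_le_one (by linarith)).2; linarith
  set σ := Real.sign (v i) with hσ
  set C1 := (‖v‖ * σ * Bl - v i)^2 with hC1
  set C2 := (‖v‖ * σ * A - v i)^2 with hC2
  set g : ℝ → ℝ := fun t => if t ≤ p then C1 else C2 with hg
  have hmg : Measurable g := Measurable.ite measurableSet_Iic measurable_const measurable_const
  have hig : Integrable g (volume.restrict (Set.Icc (0:ℝ) 1)) := by
    have : g = (Set.Iic p).piecewise (fun _ => C1) (fun _ => C2) := by
      funext t; by_cases h : t ≤ p <;> simp [Set.piecewise, h, hg]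
    rw [this]
    exact Integrable.piecewise measurableSet_Iic
      (integrable_const _).integrableOn (integrable_const _).integrableOn
  have hfun : (fun u : Fin d → ℝ => (quant (nuqLevels s) s v u i - v i)^2) = fun u => g (u i) := by
    funext u
    show (‖v‖ * σ * (if u i ≤ p then Bl else A) - v i)^2 = _
    by_cases h : u i ≤ p <;> simp [g, h, hC1, hC2]
  constructor
  · rw [hfun]
    exact ((measurePreserving_eval d i).integrable_comp hig.aestronglyMeasurable).2 hig
  · rw [hfun, integral_eval d i g hig.aestronglyMeasurable]
    have := step_integral p C1 C2 hp0 hp1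
    rw [show (∫ t in Set.Icc (0:ℝ) 1, g t) = ∫ t in Set.Icc (0:ℝ) 1, (if t ≤ p then C1 else C2) from rfl, this]
    -- algebra
    by_cases hvi : v i = 0
    · have hrz : r = 0 := by rw [hr, hvi]; simp
      have hAz : A = 0 := le_antisymm (by rw [← hrz]; exact hAr) (nuq_nonneg s J)
      have hσz : σ = 0 := by rw [hσ, hvi, Real.sign_zero]
      have hpz : p = 0 := by rw [hpval, hrz, hAz]; simp
      have hC2z : C2 = 0 := by rw [hC2, hσz, hvi]; ring
      rw [hpz, hC2z, hrz, hAz]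
      ring
    · have hσ2 : σ * σ = 1 := by
        rcases Real.sign_apply_eq_of_ne_zero (v i) hvi with h1 | h1 <;> rw [hσ, h1] <;> norm_num
      have hvir : v i = σ * (‖v‖ * r) := by
        rw [hr, mul_div_assoc', mul_comm ‖v‖, mul_div_assoc, div_self hN.ne', mul_one]
        exact (sign_mul_abs' (v i)).symm
      have key : ∀ c : ℝ, (‖v‖ * σ * c - v i)^2 = ‖v‖^2 * (c - r)^2 := by
        intro c
        rw [hvir]
        have : (‖v‖ * σ * c - σ * (‖v‖ * r))^2 = (σ * σ) * (‖v‖*c - ‖v‖*r)^2 := by ring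
        rw [this, hσ2, one_mul]; ring
      rw [hC1, hC2, key Bl, key A, hpval]
      have hABne : Bl - A ≠ 0 := by linarith
      field_simp
      ring
end

/-- **Theorem 2, second part (variance bound for `2^{2s} ≤ d`)**: with the NUQSGD levels,
`E[‖Q_s(v) − v‖²] ≤ ‖v‖² (min{2^{-2s}(d − 2^{2s})/4, 2^{-s}√(d − 2^{2s})} + 3(s−1)/16 + 1/4)`. -/
theorem nuq_variance_bound_large_d (d s : ℕ) (hd : 1 ≤ d) (hs : 1 ≤ s)
    (hds : 2 ^ (2 * s) ≤ d)
    (v : EuclideanSpace ℝ (Fin d)) (hv : v ≠ 0) :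
    (∫ u, ‖quant (nuqLevels s) s v u - v‖ ^ 2 ∂(unifCube d)) ≤
      ‖v‖ ^ 2 *
        (min ((2:ℝ) ^ (-(2 * (s:ℤ))) * ((d:ℝ) - 2 ^ (2 * s)) / 4)
             ((2:ℝ) ^ (-(s:ℤ)) * Real.sqrt ((d:ℝ) - 2 ^ (2 * s))) +
          3 * ((s:ℝ) - 1) / 16 + 1 / 4) := by
  have hN : (0:ℝ) < ‖v‖ := norm_pos_iff.2 hv
  have hnv : ‖v‖^2 = ∑ i, (v i)^2 := by
    rw [EuclideanSpace.norm_eq, Real.sq_sqrt (by positivity)]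
    congr 1; funext i; rw [Real.norm_eq_abs, sq_abs]
  have hsum : ∑ i, (|v i| / ‖v‖)^2 = 1 := by
    have : ∑ i, (|v i| / ‖v‖)^2 = (∑ i, (v i)^2) / ‖v‖^2 := by
      rw [Finset.sum_div]
      congr 1; funext i
      rw [div_pow, sq_abs]
    rw [this, ← hnv, div_self (by positivity)]
  have hr0 : ∀ i, 0 ≤ |v i| / ‖v‖ := fun i => by positivity
  have hr1 : ∀ i, |v i| / ‖v‖ ≤ 1 := fun i => (div_le_one hN).2 (abs_coord_le d v i)
  have hnorm : ∀ u : Fin d → ℝ, ‖quant (nuqLevels s) s v u - v‖^2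
      = ∑ i, (quant (nuqLevels s) s v u i - v i)^2 := by
    intro u
    rw [EuclideanSpace.norm_eq, Real.sq_sqrt (by positivity)]
    congr 1; funext i
    rw [show (quant (nuqLevels s) s v u - v) i = quant (nuqLevels s) s v u i - v i from rfl,
      Real.norm_eq_abs, sq_abs]
  have hint : ∀ i : Fin d, Integrable (fun u => (quant (nuqLevels s) s v u i - v i)^2) (unifCube d) :=
    fun i => (coord_stuff s d v hv i).1
  have hval : ∀ i : Fin d, (∫ u, (quant (nuqLevels s) s v u i - v i)^2 ∂(unifCube d))
      = ‖v‖^2 * ((|v i| / ‖v‖ - nuqLevels s (levIdx (nuqLevels s) s (|v i| / ‖v‖)))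
          * (nuqLevels s (levIdx (nuqLevels s) s (|v i| / ‖v‖) + 1) - |v i| / ‖v‖)) :=
    fun i => (coord_stuff s d v hv i).2
  have hLHS : (∫ u, ‖quant (nuqLevels s) s v u - v‖ ^ 2 ∂(unifCube d))
      = ‖v‖^2 * ∑ i, ((|v i| / ‖v‖ - nuqLevels s (levIdx (nuqLevels s) s (|v i| / ‖v‖)))
          * (nuqLevels s (levIdx (nuqLevels s) s (|v i| / ‖v‖) + 1) - |v i| / ‖v‖)) := by
    rw [show (fun u => ‖quant (nuqLevels s) s v u - v‖ ^ 2)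
        = fun u => ∑ i, (quant (nuqLevels s) s v u i - v i)^2 from funext hnorm]
    rw [integral_finset_sum Finset.univ (fun i _ => hint i), Finset.mul_sum]
    exact Finset.sum_congr rfl (fun i _ => hval i)
  rw [hLHS]
  apply mul_le_mul_of_nonneg_left _ (by positivity : (0:ℝ) ≤ ‖v‖^2)
  apply main_ineq d s hs (by exact_mod_cast hds) (fun i => |v i| / ‖v‖) _ hsum hr0
  · intro i h
    exact var_bin0 s (|v i| / ‖v‖) h
  · intro i h
    exact var_bin_pos s (|v i| / ‖v‖) (hr0 i) (hr1 i) h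
  · intro i
    exact var_all s hs (|v i| / ‖v‖) (hr0 i) (hr1 i)
end
end

section
/- Let d ≥ 1 and s ≥ 1 be integers and let L = (l_0, l_1, …, l_{s+1}) be any sequence of quantization levels. If d ≥ (2/l_1)², then every constant vector v = (r, r, …, r) ∈ ℝ^d with r ≠ 0 satisfies E[‖Q_s(v) − v‖²] ≥ ‖v‖² · l_1 · √d / 2; in particular, there exists a nonzero vector whose quantization variance is at least ‖v‖² l_1 √d / 2, so the variance is Ω(√d) in the dimension. -/
open MeasureTheory Real

noncomputable section

lemma pi_map_eval {ι : Type*} [Fintype ι] [DecidableEq ι] {α : ι → Type*}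
    [∀ i, MeasurableSpace (α i)]
    (μ : ∀ i, Measure (α i)) [∀ i, IsProbabilityMeasure (μ i)] (i : ι) :
    (Measure.pi μ).map (Function.eval i) = μ i := by
  ext A hA
  rw [Measure.map_apply (measurable_pi_apply i) hA]
  have h : Function.eval i ⁻¹' A = Set.univ.pi (Function.update (fun _ => Set.univ) i A) := by
    ext u
    constructor
    · intro hu j _
      by_cases hj : j = i
      · subst hj; simpa using hu
      · simp [Function.update_of_ne hj]
    · intro hu
      have := hu i (Set.mem_univ i)
      simpa using this
  rw [h, Measure.pi_pi]
  rw [Finset.prod_eq_single i (fun j _ hj => by simp [Function.update_of_ne hj])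
    (fun h => absurd (Finset.mem_univ i) h)]
  simp

lemma integral_comp_eval {d : ℕ} (g : ℝ → ℝ) (hg : Measurable g) (i : Fin d) :
    ∫ u, g (u i) ∂(unifCube d) = ∫ x in Set.Icc (0:ℝ) 1, g x := by
  haveI : IsProbabilityMeasure (volume.restrict (Set.Icc (0:ℝ) 1)) :=
    ⟨by simp⟩
  rw [show (∫ x in Set.Icc (0:ℝ) 1, g x) =
      ∫ x, g x ∂((Measure.pi fun _ : Fin d => volume.restrict (Set.Icc (0:ℝ) 1)).map
        (Function.eval i)) by rw [pi_map_eval]]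
  rw [integral_map (measurable_pi_apply i).aemeasurable hg.aestronglyMeasurable]
  rfl

lemma integral_ite_Icc (p A B : ℝ) (hp0 : 0 ≤ p) (hp1 : p ≤ 1) :
    ∫ x in Set.Icc (0:ℝ) 1, (if x ≤ p then A else B) = p * A + (1 - p) * B := by
  have hsplit : Set.Icc (0:ℝ) 1 = Set.Icc 0 p ∪ Set.Ioc p 1 :=
    (Set.Icc_union_Ioc_eq_Icc hp0 hp1).symm
  have hEq1 : Set.EqOn (fun x : ℝ => if x ≤ p then A else B) (fun _ => A) (Set.Icc 0 p) :=
    fun x hx => if_pos hx.2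
  have hEq2 : Set.EqOn (fun x : ℝ => if x ≤ p then A else B) (fun _ => B) (Set.Ioc p 1) :=
    fun x hx => if_neg (not_le.2 hx.1)
  have hi1 : IntegrableOn (fun x : ℝ => if x ≤ p then A else B) (Set.Icc 0 p) :=
    (integrableOn_congr_fun hEq1 measurableSet_Icc).2
      (integrableOn_const measure_Icc_lt_top.ne)
  have hi2 : IntegrableOn (fun x : ℝ => if x ≤ p then A else B) (Set.Ioc p 1) :=
    (integrableOn_congr_fun hEq2 measurableSet_Ioc).2
      (integrableOn_const measure_Ioc_lt_top.ne)
  have hdisj : Disjoint (Set.Icc (0:ℝ) p) (Set.Ioc p 1) := by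
    rw [Set.disjoint_left]
    rintro x hx1 hx2
    exact absurd hx1.2 (not_le.2 hx2.1)
  rw [hsplit, setIntegral_union hdisj measurableSet_Ioc hi1 hi2]
  rw [setIntegral_congr_fun measurableSet_Icc hEq1, setIntegral_congr_fun measurableSet_Ioc hEq2]
  rw [setIntegral_const, setIntegral_const, measureReal_def, measureReal_def, Real.volume_Icc, Real.volume_Ioc,
    ENNReal.toReal_ofReal (by linarith), ENNReal.toReal_ofReal (by linarith)]
  simp [smul_eq_mul]

/-- **Theorem 4 (Lower bound)**: for any sequence of quantization levels, if `d ≥ (2/l₁)²`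
then every nonzero constant vector `v = (r, …, r)` satisfies
`E[‖Q_s(v) − v‖²] ≥ ‖v‖² l₁ √d / 2`; in particular the worst-case variance is `Ω(√d)`. -/
theorem nuq_variance_lower_bound (d s : ℕ) (hd : 1 ≤ d) (hs : 1 ≤ s)
    (l : ℕ → ℝ) (hl : IsLevels l s)
    (hdl : (2 / l 1) ^ 2 ≤ (d:ℝ))
    (r : ℝ) (hr : r ≠ 0)
    (v : EuclideanSpace ℝ (Fin d)) (hv : ∀ i, v i = r) :
    ‖v‖ ^ 2 * l 1 * Real.sqrt d / 2 ≤
      ∫ u, ‖quant l s v u - v‖ ^ 2 ∂(unifCube d) := by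
  obtain ⟨hl0, hls, hmono⟩ := hl
  have hl1 : 0 < l 1 := hl0 ▸ hmono 0 (Nat.zero_le s)
  have hdpos : (0:ℝ) < d := by exact_mod_cast Nat.lt_of_lt_of_le Nat.zero_lt_one hd
  set c : ℝ := Real.sqrt d with hcdef
  have hc : 0 < c := Real.sqrt_pos.2 hdpos
  have ha : 2 ≤ c * l 1 := by
    have h1 : 2 / l 1 ≤ c := (Real.le_sqrt (by positivity) (le_of_lt hdpos)).2 hdl
    have := (div_le_iff₀ hl1).1 h1
    linarith
  have hrpos : 0 < |r| := abs_pos.2 hr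
  have hnv : ‖v‖ = c * |r| := by
    rw [EuclideanSpace.norm_eq]
    have : ∑ i : Fin d, ‖v i‖ ^ 2 = (d : ℝ) * r ^ 2 := by
      simp [hv, Real.norm_eq_abs, sq_abs, Finset.sum_const, Finset.card_univ, mul_comm]
    rw [this, Real.sqrt_mul (le_of_lt hdpos), Real.sqrt_sq_eq_abs]
  have hnvsq : ‖v‖ ^ 2 = (d : ℝ) * r ^ 2 := by
    rw [hnv, mul_pow, sq_abs, hcdef, Real.sq_sqrt (le_of_lt hdpos)]
  have hrho : ∀ i : Fin d, |v i| / ‖v‖ = c⁻¹ := by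
    intro i
    rw [hv i, hnv, mul_comm, div_mul_eq_div_div, div_self (ne_of_gt hrpos), one_div]
  have hcinv : c⁻¹ < l 1 := by
    rw [inv_lt_iff_one_lt_mul₀ hc]
    nlinarith
  have key : ∀ j, 1 ≤ j → j ≤ s → l 1 ≤ l j := by
    intro j h1 h2
    induction j with
    | zero => omega
    | succ n ih =>
      rcases Nat.eq_or_lt_of_le h1 with h | h
      · have : n = 0 := by omega
        simp [this]
      · have hn1 : 1 ≤ n := by omega
        have h3 := hmono n (by omega)
        have h4 := ih hn1 (by omega)
        linarith
  have hS : {j | j ≤ s ∧ l j ≤ c⁻¹} = {0} := by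
    ext j
    simp only [Set.mem_setOf_eq, Set.mem_singleton_iff]
    constructor
    · rintro ⟨hj, hlj⟩
      by_contra h0
      have h1 : 1 ≤ j := by omega
      have := key j h1 hj
      linarith
    · rintro rfl
      exact ⟨Nat.zero_le s, by rw [hl0]; positivity⟩
  have hidx : levIdx l s c⁻¹ = 0 := by
    unfold levIdx
    rw [hS]
    exact csSup_singleton 0
  have hpval : quantP l s c⁻¹ = c⁻¹ / l 1 := by
    unfold quantP
    rw [hidx, hl0]
    simp
  set p : ℝ := c⁻¹ / l 1 with hpdef
  have hp0 : 0 ≤ p := by positivity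
  have hp1 : p ≤ 1 := by
    rw [hpdef, div_le_one hl1]
    have : 1 < c * l 1 := by linarith
    rw [inv_le_iff_one_le_mul₀ hc]
    nlinarith
  set A : ℝ := (c * r * l 1 - r) ^ 2 with hAdef
  set B : ℝ := r ^ 2 with hBdef
  set G : ℝ → ℝ := fun x => if x ≤ p then A else B with hGdef
  have hGm : Measurable G :=
    Measurable.ite (measurableSet_le measurable_id measurable_const)
      measurable_const measurable_const
  have hcoord : ∀ u : Fin d → ℝ, ∀ i : Fin d,
      (quant l s v u i - v i) ^ 2 = G (u i) := by
    intro u i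
    unfold quant
    dsimp only
    rw [hrho i, hidx, hpval, hl0, hv i, hnv]
    simp only [Nat.zero_add]
    have hsgn0 : Real.sign r * |r| = r := by
      rcases lt_trichotomy r 0 with h | h | h
      · rw [Real.sign_of_neg h, abs_of_neg h]; ring
      · exact absurd h hr
      · rw [Real.sign_of_pos h, abs_of_pos h]; ring
    have hsgn : c * |r| * Real.sign r = c * r := by
      rw [mul_assoc, mul_comm (|r|), hsgn0]
    simp only [hGdef]
    split_ifs with h
    · rw [hsgn, hAdef]
    · rw [hsgn, hBdef]; ring
  have hGnorm : ∀ u : Fin d → ℝ, ‖quant l s v u - v‖ ^ 2 = ∑ i, G (u i) := by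
    intro u
    rw [EuclideanSpace.norm_eq, Real.sq_sqrt (Finset.sum_nonneg fun i _ => sq_nonneg _)]
    refine Finset.sum_congr rfl fun i _ => ?_
    rw [Real.norm_eq_abs, sq_abs]
    have : (quant l s v u - v) i = quant l s v u i - v i := rfl
    rw [this, hcoord u i]
  haveI : IsProbabilityMeasure (volume.restrict (Set.Icc (0:ℝ) 1)) := ⟨by simp⟩
  haveI : IsProbabilityMeasure (unifCube d) := by
    unfold unifCube; infer_instance
  have hInt : ∀ i : Fin d, Integrable (fun u : Fin d → ℝ => G (u i)) (unifCube d) := by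
    intro i
    refine (integrable_const (max |A| |B|)).mono'
      ((hGm.comp (measurable_pi_apply i)).aestronglyMeasurable) ?_
    filter_upwards with u
    simp only [Real.norm_eq_abs, hGdef]
    split_ifs
    · exact le_max_left _ _
    · exact le_max_right _ _
  have hIntegral : ∫ u, ‖quant l s v u - v‖ ^ 2 ∂(unifCube d)
      = (d : ℝ) * (p * A + (1 - p) * B) := by
    rw [integral_congr_ae (Filter.Eventually.of_forall hGnorm)]
    rw [integral_finset_sum Finset.univ fun i _ => hInt i]
    have : ∀ i : Fin d, ∫ u, G (u i) ∂(unifCube d) = p * A + (1 - p) * B := by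
      intro i
      rw [integral_comp_eval G hGm i, hGdef]
      exact integral_ite_Icc p A B hp0 hp1
    rw [Finset.sum_congr rfl fun i _ => this i]
    rw [Finset.sum_const, Finset.card_univ, Fintype.card_fin, nsmul_eq_mul]
  rw [hIntegral, hnvsq, hBdef]
  have hsum : p * A + (1 - p) * B = r ^ 2 * (c * l 1 - 1) := by
    rw [hpdef, hAdef, hBdef]
    have hc' : c ≠ 0 := ne_of_gt hc
    have hl1' : l 1 ≠ 0 := ne_of_gt hl1
    field_simp
    ring
  rw [hsum]
  have hr2 : (0:ℝ) ≤ r ^ 2 := sq_nonneg r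
  have hd0 : (0:ℝ) ≤ (d:ℝ) := le_of_lt hdpos
  nlinarith [mul_nonneg (mul_nonneg hd0 hr2) (by linarith : (0:ℝ) ≤ c * l 1 - 2)]
end
end

section
/- Let d ≥ 1 and s ≥ 1 be integers, let L = (l_0, …, l_{s+1}) be any sequence of quantization levels, and set τ_j = l_{j+1} − l_j for j = 0, …, s. For every nonzero v ∈ ℝ^d, E[‖Q_s(v) − v‖²] ≤ ε_QP · ‖v‖², where ε_QP is the supremum of Σ_{j=0}^s z_j over all (x_0, …, x_s, z_0, …, z_s) ∈ ℝ^{2s+2} satisfying: x_j ≥ 0 for all j; Σ_{j=0}^s x_j ≤ d; d − Σ_{k=0}^j x_k ≤ (1/l_{j+1})² for j = 0, …, s−1; z_0 ≤ τ_0² x_0/4 and z_0² ≤ τ_0² x_0; and, for j = 1, …, s, z_j ≤ τ_j² x_j/4 and z_j² + τ_j² l_j² x_j² + 2 τ_j l_j x_j z_j ≤ τ_j² x_j. -/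
open MeasureTheory Real

noncomputable section

namespace NuqAux

variable {l : ℕ → ℝ} {s : ℕ}

lemma lev_mono (hl : IsLevels l s) {j k : ℕ} (hjk : j ≤ k) (hk : k ≤ s + 1) : l j ≤ l k := by
  induction k with
  | zero => simp_all
  | succ n ih =>
    rcases eq_or_lt_of_le hjk with rfl | h
    · exact le_refl _
    · exact le_trans (ih (by omega) (by omega)) (le_of_lt (hl.2.2 n (by omega)))

lemma lev_nonneg (hl : IsLevels l s) {j : ℕ} (hj : j ≤ s + 1) : 0 ≤ l j :=
  hl.1 ▸ lev_mono hl (Nat.zero_le _) hj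

lemma lev_pos (hl : IsLevels l s) {j : ℕ} (h1 : 1 ≤ j) (hj : j ≤ s + 1) : 0 < l j :=
  lt_of_lt_of_le (hl.1 ▸ hl.2.2 0 (Nat.zero_le _)) (lev_mono hl h1 hj)

lemma levIdx_mem (hl : IsLevels l s) {r : ℝ} (hr : 0 ≤ r) :
    levIdx l s r ≤ s ∧ l (levIdx l s r) ≤ r := by
  have h0 : 0 ∈ {j | j ≤ s ∧ l j ≤ r} := ⟨Nat.zero_le _, by rw [hl.1]; exact hr⟩
  have hbdd : BddAbove {j | j ≤ s ∧ l j ≤ r} := ⟨s, fun j hj => hj.1⟩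
  exact Nat.sSup_mem ⟨0, h0⟩ hbdd

lemma levIdx_le (hl : IsLevels l s) {r : ℝ} (hr : 0 ≤ r) : levIdx l s r ≤ s :=
  (levIdx_mem hl hr).1

lemma l_levIdx_le (hl : IsLevels l s) {r : ℝ} (hr : 0 ≤ r) : l (levIdx l s r) ≤ r :=
  (levIdx_mem hl hr).2

lemma le_l_levIdx_succ (hl : IsLevels l s) {r : ℝ} (hr : 0 ≤ r) (hr1 : r ≤ 1) :
    r ≤ l (levIdx l s r + 1) := by
  by_cases h : levIdx l s r = s
  · rw [h, hl.2.1]; exact hr1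
  · have hle : levIdx l s r ≤ s := levIdx_le hl hr
    by_contra hc
    push_neg at hc
    have hmem : levIdx l s r + 1 ∈ {j | j ≤ s ∧ l j ≤ r} := ⟨by omega, le_of_lt hc⟩
    have hbdd : BddAbove {j | j ≤ s ∧ l j ≤ r} := ⟨s, fun j hj => hj.1⟩
    have : levIdx l s r + 1 ≤ levIdx l s r := le_csSup hbdd hmem
    omega

lemma tau_pos (hl : IsLevels l s) {j : ℕ} (hj : j ≤ s) : 0 < l (j + 1) - l j :=
  sub_pos.mpr (hl.2.2 j hj)

lemma quantP_mem (hl : IsLevels l s) {r : ℝ} (hr : 0 ≤ r) (hr1 : r ≤ 1) :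
    0 ≤ quantP l s r ∧ quantP l s r ≤ 1 := by
  have hτ := tau_pos hl (levIdx_le hl hr)
  constructor
  · exact div_nonneg (sub_nonneg.mpr (l_levIdx_le hl hr)) (le_of_lt hτ)
  · unfold quantP
    rw [div_le_one hτ]
    have := le_l_levIdx_succ hl hr hr1
    linarith

lemma quantP_mul (hl : IsLevels l s) {r : ℝ} (hr : 0 ≤ r) :
    quantP l s r * (l (levIdx l s r + 1) - l (levIdx l s r)) = r - l (levIdx l s r) :=
  div_mul_cancel₀ _ (ne_of_gt (tau_pos hl (levIdx_le hl hr)))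

lemma levIdx_zero (hl : IsLevels l s) : levIdx l s 0 = 0 := by
  have h := levIdx_mem hl (le_refl (0:ℝ))
  by_contra hne
  have h1 : 1 ≤ levIdx l s 0 := by omega
  have := lev_pos hl h1 (by omega)
  linarith [h.2]

lemma quantP_zero (hl : IsLevels l s) : quantP l s 0 = 0 := by
  simp [quantP, levIdx_zero hl, hl.1]

lemma integral_step (A B p : ℝ) (hp0 : 0 ≤ p) (hp1 : p ≤ 1) :
    (∫ t in Set.Icc (0:ℝ) 1, (if t ≤ p then A else B)) = A * p + B * (1 - p) := by
  have hsplit : Set.Icc (0:ℝ) 1 = Set.Icc 0 p ∪ Set.Ioc p 1 :=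
    (Set.Icc_union_Ioc_eq_Icc hp0 hp1).symm
  have hdisj : Disjoint (Set.Icc (0:ℝ) p) (Set.Ioc p 1) := by
    rw [Set.disjoint_left]
    intro t ht ht'
    exact absurd ht.2 (not_le.mpr ht'.1)
  have hc1 : IntegrableOn (fun _ : ℝ => A) (Set.Icc (0:ℝ) p) volume :=
    (integrableOn_const_iff).mpr (Or.inr measure_Icc_lt_top)
  have hc2 : IntegrableOn (fun _ : ℝ => B) (Set.Ioc (p:ℝ) 1) volume :=
    (integrableOn_const_iff).mpr (Or.inr measure_Ioc_lt_top)
  have hint1 : IntegrableOn (fun t : ℝ => if t ≤ p then A else B) (Set.Icc 0 p) volume :=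
    hc1.congr_fun (fun t ht => by simp [ht.2]) measurableSet_Icc
  have hint2 : IntegrableOn (fun t : ℝ => if t ≤ p then A else B) (Set.Ioc p 1) volume :=
    hc2.congr_fun (fun t ht => by simp [not_le.mpr ht.1]) measurableSet_Ioc
  rw [hsplit, setIntegral_union hdisj measurableSet_Ioc hint1 hint2]
  have h1 : (∫ t in Set.Icc (0:ℝ) p, (if t ≤ p then A else B)) = A * p := by
    rw [setIntegral_congr_fun measurableSet_Icc
      (fun t ht => by simp [ht.2] : ∀ t ∈ Set.Icc (0:ℝ) p, (if t ≤ p then A else B) = A)]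
    simp [Real.volume_Icc, ENNReal.toReal_ofReal hp0, mul_comm, hp0]
  have h2 : (∫ t in Set.Ioc (p:ℝ) 1, (if t ≤ p then A else B)) = B * (1 - p) := by
    rw [setIntegral_congr_fun measurableSet_Ioc
      (fun t ht => by simp [not_le.mpr ht.1] : ∀ t ∈ Set.Ioc (p:ℝ) 1, (if t ≤ p then A else B) = B)]
    simp [Real.volume_Ioc, ENNReal.toReal_ofReal (by linarith : (0:ℝ) ≤ 1 - p), mul_comm, hp1]
  rw [h1, h2]

instance : IsProbabilityMeasure (volume.restrict (Set.Icc (0:ℝ) 1)) :=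
  ⟨by simp [Real.volume_Icc]⟩

instance (d : ℕ) : IsProbabilityMeasure (unifCube d) := by
  unfold unifCube; infer_instance

lemma map_eval (d : ℕ) (i : Fin d) :
    (unifCube d).map (fun u => u i) = volume.restrict (Set.Icc (0:ℝ) 1) := by
  have hm : Measurable fun u : Fin d → ℝ => u i := measurable_pi_apply i
  ext t ht
  rw [Measure.map_apply hm ht]
  have hpre : (fun u : Fin d → ℝ => u i) ⁻¹' t
      = Set.pi Set.univ (fun j => if j = i then t else Set.univ) := by
    ext u
    simp only [Set.mem_preimage, Set.mem_pi, Set.mem_univ, true_implies]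
    constructor
    · intro h j; by_cases hj : j = i <;> simp [hj, h]
    · intro h; have := h i; simpa using this
  rw [hpre, unifCube, Measure.pi_pi]
  rw [Finset.prod_eq_single i (fun j _ hj => by simp [hj]) (by simp)]
  simp

lemma integral_coord (d : ℕ) (i : Fin d) (p A B : ℝ) :
    (∫ u, (if u i ≤ p then A else B) ∂(unifCube d))
      = ∫ t in Set.Icc (0:ℝ) 1, (if t ≤ p then A else B) := by
  have hm : Measurable fun u : Fin d → ℝ => u i := measurable_pi_apply i
  have hf : Measurable fun t : ℝ => if t ≤ p then A else B :=
    Measurable.ite measurableSet_Iic measurable_const measurable_const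
  rw [← map_eval d i, integral_map hm.aemeasurable hf.aestronglyMeasurable]

lemma integrable_coord (d : ℕ) (i : Fin d) (p A B : ℝ) :
    Integrable (fun u : Fin d → ℝ => if u i ≤ p then A else B) (unifCube d) := by
  have hm : MeasurableSet {u : Fin d → ℝ | u i ≤ p} :=
    measurableSet_le (measurable_pi_apply i) measurable_const
  have : (fun u : Fin d → ℝ => if u i ≤ p then A else B)
      = fun u => Set.indicator {u : Fin d → ℝ | u i ≤ p} (fun _ => A - B) u + B := by
    funext u
    by_cases h : u i ≤ p <;> simp [h, Set.indicator_of_mem, Set.indicator_of_notMem]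
  rw [this]
  exact ((integrable_const (A - B)).indicator hm).add (integrable_const B)

end NuqAux

/-- **Theorem 5 (QCQP bound)**: for any levels `L`, with `τⱼ = l_{j+1} − lⱼ`,
`E[‖Q_s(v) − v‖²] ≤ ε_QP ‖v‖²`, where `ε_QP` is the optimal value of the quadratically
constrained quadratic program `max Σⱼ zⱼ` subject to `xⱼ ≥ 0`, `Σⱼ xⱼ ≤ d`,
`d − Σ_{k=0}^{j} x_k ≤ (1/l_{j+1})²` for `j ≤ s−1`, `z₀ ≤ τ₀²x₀/4`, `z₀² ≤ τ₀²x₀`, and for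
`j = 1, …, s`: `zⱼ ≤ τⱼ²xⱼ/4` and `zⱼ² + τⱼ²lⱼ²xⱼ² + 2τⱼlⱼxⱼzⱼ ≤ τⱼ²xⱼ`. -/
theorem nuq_variance_QCQP_bound (d s : ℕ) (hd : 1 ≤ d) (hs : 1 ≤ s)
    (l : ℕ → ℝ) (hl : IsLevels l s)
    (v : EuclideanSpace ℝ (Fin d)) (hv : v ≠ 0) :
    (∫ u, ‖quant l s v u - v‖ ^ 2 ∂(unifCube d)) ≤
      sSup {y : ℝ | ∃ x z : ℕ → ℝ,
        (∀ j ≤ s, 0 ≤ x j) ∧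
        (∑ j ∈ Finset.range (s + 1), x j ≤ (d:ℝ)) ∧
        (∀ j < s, (d:ℝ) - ∑ k ∈ Finset.range (j + 1), x k ≤ (1 / l (j + 1)) ^ 2) ∧
        (z 0 ≤ (l 1 - l 0) ^ 2 * x 0 / 4) ∧
        ((z 0) ^ 2 ≤ (l 1 - l 0) ^ 2 * x 0) ∧
        (∀ j, 1 ≤ j → j ≤ s →
          z j ≤ (l (j + 1) - l j) ^ 2 * x j / 4 ∧
          (z j) ^ 2 + (l (j + 1) - l j) ^ 2 * (l j) ^ 2 * (x j) ^ 2 +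
              2 * (l (j + 1) - l j) * l j * x j * z j ≤ (l (j + 1) - l j) ^ 2 * x j) ∧
        y = ∑ j ∈ Finset.range (s + 1), z j} * ‖v‖ ^ 2 := by
  classical
  have hnv : (0:ℝ) < ‖v‖ := norm_pos_iff.mpr hv
  set r : Fin d → ℝ := fun i => |v i| / ‖v‖ with hr_def
  set J : Fin d → ℕ := fun i => levIdx l s (r i) with hJ_def
  set p : Fin d → ℝ := fun i => quantP l s (r i) with hp_def
  set τ : ℕ → ℝ := fun j => l (j + 1) - l j with hτ_def
  -- basic coordinate facts
  have hsumsq : ‖v‖ ^ 2 = ∑ i, (v i) ^ 2 := by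
    rw [EuclideanSpace.norm_eq, Real.sq_sqrt (Finset.sum_nonneg fun i _ => by positivity)]
    simp [Real.norm_eq_abs, sq_abs]
  have habs_le : ∀ i, |v i| ≤ ‖v‖ := by
    intro i
    have h1 : (v i) ^ 2 ≤ ‖v‖ ^ 2 := by
      rw [hsumsq]
      exact Finset.single_le_sum (fun j _ => sq_nonneg (v j)) (Finset.mem_univ i)
    calc |v i| = Real.sqrt ((v i) ^ 2) := (Real.sqrt_sq_eq_abs _).symm
      _ ≤ Real.sqrt (‖v‖ ^ 2) := Real.sqrt_le_sqrt h1
      _ = ‖v‖ := Real.sqrt_sq hnv.le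
  have hr0 : ∀ i, 0 ≤ r i := fun i => div_nonneg (abs_nonneg _) hnv.le
  have hr1 : ∀ i, r i ≤ 1 := fun i => (div_le_one hnv).mpr (habs_le i)
  have hJs : ∀ i, J i ≤ s := fun i => NuqAux.levIdx_le hl (hr0 i)
  have hp0 : ∀ i, 0 ≤ p i := fun i => (NuqAux.quantP_mem hl (hr0 i) (hr1 i)).1
  have hp1 : ∀ i, p i ≤ 1 := fun i => (NuqAux.quantP_mem hl (hr0 i) (hr1 i)).2
  have hpm : ∀ i, p i * τ (J i) = r i - l (J i) := fun i => NuqAux.quantP_mul hl (hr0 i)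
  have hτpos : ∀ j ≤ s, 0 < τ j := fun j hj => NuqAux.tau_pos hl hj
  have hRsum : ∑ i, (r i) ^ 2 = 1 := by
    rw [hr_def]
    simp only [div_pow, sq_abs]
    rw [← Finset.sum_div, ← hsumsq]
    exact div_self (by positivity)
  set V : Fin d → ℝ := fun i => τ (J i) ^ 2 * (p i * (1 - p i)) with hV_def
  have hV0 : ∀ i, 0 ≤ V i := by
    intro i
    have := hp0 i; have := hp1 i
    have : 0 ≤ p i * (1 - p i) := mul_nonneg (hp0 i) (by linarith [hp1 i])
    positivity
  -- the per-coordinate integral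
  have key : ∀ i, (∫ u, (quant l s v u i - v i) ^ 2 ∂(unifCube d))
      = ‖v‖ ^ 2 * V i := by
    intro i
    have hfun : ∀ u : Fin d → ℝ, (quant l s v u i - v i) ^ 2
        = if u i ≤ p i then (‖v‖ * Real.sign (v i) * l (J i + 1) - v i) ^ 2
          else (‖v‖ * Real.sign (v i) * l (J i) - v i) ^ 2 := by
      intro u
      show ((‖v‖ * Real.sign (v i) *
        (if u i ≤ p i then l (J i + 1) else l (J i))) - v i) ^ 2 = _
      by_cases h : u i ≤ p i <;> simp [h]
    simp_rw [hfun]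
    rw [NuqAux.integral_coord, NuqAux.integral_step _ _ _ (hp0 i) (hp1 i)]
    by_cases hvi : v i = 0
    · have hri : r i = 0 := by simp [hr_def, hvi]
      have hpi : p i = 0 := by
        show quantP l s (r i) = 0
        rw [hri, NuqAux.quantP_zero hl]
      simp [hvi, Real.sign_zero, hpi, hV_def]
    · have hσ2 : Real.sign (v i) ^ 2 = 1 := by
        rcases lt_trichotomy (v i) 0 with h | h | h
        · rw [Real.sign_of_neg h]; norm_num
        · exact absurd h hvi
        · rw [Real.sign_of_pos h]; norm_num
      have hvv : v i = Real.sign (v i) * (‖v‖ * r i) := by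
        have h1 : ‖v‖ * r i = |v i| := by
          rw [hr_def]
          field_simp
        rw [h1]
        rcases lt_trichotomy (v i) 0 with h | h | h
        · rw [Real.sign_of_neg h, abs_of_neg h]; ring
        · exact absurd h hvi
        · rw [Real.sign_of_pos h, abs_of_pos h]; ring
      have hpm' : p i * (l (J i + 1) - l (J i)) = r i - l (J i) := hpm i
      have e1 : ‖v‖ * Real.sign (v i) * l (J i + 1) - v i
          = Real.sign (v i) * ‖v‖ * ((1 - p i) * (l (J i + 1) - l (J i))) := by
        linear_combination (-1 : ℝ) * hvv + (Real.sign (v i) * ‖v‖) * hpm'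
      have e2 : ‖v‖ * Real.sign (v i) * l (J i) - v i
          = Real.sign (v i) * ‖v‖ * (-(p i) * (l (J i + 1) - l (J i))) := by
        linear_combination (-1 : ℝ) * hvv + (Real.sign (v i) * ‖v‖) * hpm'
      rw [e1, e2, hV_def]
      show _ = ‖v‖ ^ 2 * ((l (J i + 1) - l (J i)) ^ 2 * (p i * (1 - p i)))
      linear_combination (‖v‖ ^ 2 * (l (J i + 1) - l (J i)) ^ 2 * (p i) * (1 - p i)) * hσ2
  -- integrability and total integral
  have hInt : ∀ i, Integrable (fun u => (quant l s v u i - v i) ^ 2) (unifCube d) := by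
    intro i
    have hfun : (fun u : Fin d → ℝ => (quant l s v u i - v i) ^ 2)
        = fun u => if u i ≤ p i then (‖v‖ * Real.sign (v i) * l (J i + 1) - v i) ^ 2
          else (‖v‖ * Real.sign (v i) * l (J i) - v i) ^ 2 := by
      funext u
      show ((‖v‖ * Real.sign (v i) *
        (if u i ≤ p i then l (J i + 1) else l (J i))) - v i) ^ 2 = _
      by_cases h : u i ≤ p i <;> simp [h]
    rw [hfun]
    exact NuqAux.integrable_coord d i _ _ _
  have hnormexp : ∀ u : Fin d → ℝ, ‖quant l s v u - v‖ ^ 2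
      = ∑ i, (quant l s v u i - v i) ^ 2 := by
    intro u
    rw [EuclideanSpace.norm_eq, Real.sq_sqrt (Finset.sum_nonneg fun i _ => by positivity)]
    apply Finset.sum_congr rfl
    intro i _
    rw [PiLp.sub_apply, Real.norm_eq_abs, sq_abs]
  have hEint : (∫ u, ‖quant l s v u - v‖ ^ 2 ∂(unifCube d)) = ‖v‖ ^ 2 * ∑ i, V i := by
    calc (∫ u, ‖quant l s v u - v‖ ^ 2 ∂(unifCube d))
        = ∫ u, ∑ i, (quant l s v u i - v i) ^ 2 ∂(unifCube d) := by
          apply integral_congr_ae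
          filter_upwards with u using hnormexp u
      _ = ∑ i, ∫ u, (quant l s v u i - v i) ^ 2 ∂(unifCube d) :=
          integral_finset_sum _ (fun i _ => hInt i)
      _ = ∑ i, ‖v‖ ^ 2 * V i := Finset.sum_congr rfl (fun i _ => key i)
      _ = ‖v‖ ^ 2 * ∑ i, V i := by rw [Finset.mul_sum]
  -- QCQP witnesses
  set x : ℕ → ℝ := fun j => ((Finset.univ.filter (fun i => J i = j)).card : ℝ) with hx_def
  set z : ℕ → ℝ := fun j => ∑ i ∈ Finset.univ.filter (fun i => J i = j), V i with hz_def
  have hx0 : ∀ j, 0 ≤ x j := fun j => Nat.cast_nonneg _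
  have hz0' : ∀ j, 0 ≤ z j := fun j => Finset.sum_nonneg (fun i _ => hV0 i)
  have hmaps : ∀ i : Fin d, i ∈ Finset.univ → J i ∈ Finset.range (s + 1) :=
    fun i _ => Finset.mem_range.mpr (Nat.lt_succ_of_le (hJs i))
  have hxsum : ∑ j ∈ Finset.range (s + 1), x j = (d : ℝ) := by
    have h1 : ∑ j ∈ Finset.range (s + 1), x j
        = (((Finset.univ : Finset (Fin d)).card : ℕ) : ℝ) := by
      rw [hx_def, ← Nat.cast_sum, ← Finset.card_eq_sum_card_fiberwise hmaps]
    rw [h1, Finset.card_univ, Fintype.card_fin]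
  -- z j ≤ τ j ^ 2 * x j / 4
  have hz_le : ∀ j, z j ≤ τ j ^ 2 * x j / 4 := by
    intro j
    have hstep : z j ≤ ∑ _i ∈ Finset.univ.filter (fun i => J i = j), τ j ^ 2 / 4 := by
      apply Finset.sum_le_sum
      intro i hi
      have hJi : J i = j := (Finset.mem_filter.mp hi).2
      have h1 : p i * (1 - p i) ≤ 1 / 4 := by nlinarith [sq_nonneg (p i - 1/2)]
      simp only [hV_def, hJi]
      calc τ j ^ 2 * (p i * (1 - p i)) ≤ τ j ^ 2 * (1 / 4) :=
            mul_le_mul_of_nonneg_left h1 (sq_nonneg _)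
        _ = τ j ^ 2 / 4 := by ring
    rw [Finset.sum_const, nsmul_eq_mul] at hstep
    calc z j ≤ _ := hstep
      _ = τ j ^ 2 * x j / 4 := by rw [hx_def]; ring
  -- the per-coordinate linearization
  have hVr : ∀ i, V i + τ (J i) * l (J i) ≤ τ (J i) * r i := by
    intro i
    have h2 : τ (J i) * (p i * τ (J i)) = τ (J i) * (r i - l (J i)) := by rw [hpm i]
    simp only [hV_def]
    nlinarith [h2, sq_nonneg (τ (J i) * p i)]
  -- the Cauchy–Schwarz constraint
  have hkey : ∀ j ≤ s, (z j + τ j * l j * x j) ^ 2 ≤ τ j ^ 2 * x j := by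
    intro j hj
    set Bn := Finset.univ.filter (fun i => J i = j) with hBn_def
    have hxBn : x j = (Bn.card : ℝ) := by rw [hx_def]
    have hVr' : ∀ i ∈ Bn, V i + τ j * l j ≤ τ j * r i := by
      intro i hi
      have hJi : J i = j := (Finset.mem_filter.mp hi).2
      have h := hVr i
      rw [hJi] at h
      exact h
    have h1 : z j + τ j * l j * x j ≤ τ j * ∑ i ∈ Bn, r i := by
      have e : z j + τ j * l j * x j = ∑ i ∈ Bn, (V i + τ j * l j) := by
        rw [Finset.sum_add_distrib, Finset.sum_const, nsmul_eq_mul, hz_def, hxBn]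
        ring
      rw [e, Finset.mul_sum]
      exact Finset.sum_le_sum hVr'
    have h2 : 0 ≤ z j + τ j * l j * x j := by
      have ha := hτpos j hj
      have hb := NuqAux.lev_nonneg hl (by omega : j ≤ s + 1)
      have hc := hz0' j
      have hd' := hx0 j
      positivity
    have h3 : (∑ i ∈ Bn, r i) ^ 2 ≤ x j * ∑ i ∈ Bn, (r i) ^ 2 := by
      have hcs := Finset.sum_mul_sq_le_sq_mul_sq Bn (fun _ => (1:ℝ)) r
      rw [hxBn]
      simpa using hcs
    have h4 : ∑ i ∈ Bn, (r i) ^ 2 ≤ 1 := by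
      rw [← hRsum]
      exact Finset.sum_le_sum_of_subset_of_nonneg (Finset.subset_univ _)
        (fun i _ _ => sq_nonneg _)
    calc (z j + τ j * l j * x j) ^ 2 ≤ (τ j * ∑ i ∈ Bn, r i) ^ 2 :=
          pow_le_pow_left₀ h2 h1 2
      _ = τ j ^ 2 * (∑ i ∈ Bn, r i) ^ 2 := by ring
      _ ≤ τ j ^ 2 * (x j * ∑ i ∈ Bn, (r i) ^ 2) :=
          mul_le_mul_of_nonneg_left h3 (sq_nonneg _)
      _ ≤ τ j ^ 2 * (x j * 1) := by
          apply mul_le_mul_of_nonneg_left _ (sq_nonneg _)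
          exact mul_le_mul_of_nonneg_left h4 (hx0 j)
      _ = τ j ^ 2 * x j := by ring
  -- the feasible set
  set S : Set ℝ := {y : ℝ | ∃ x z : ℕ → ℝ,
        (∀ j ≤ s, 0 ≤ x j) ∧
        (∑ j ∈ Finset.range (s + 1), x j ≤ (d:ℝ)) ∧
        (∀ j < s, (d:ℝ) - ∑ k ∈ Finset.range (j + 1), x k ≤ (1 / l (j + 1)) ^ 2) ∧
        (z 0 ≤ (l 1 - l 0) ^ 2 * x 0 / 4) ∧
        ((z 0) ^ 2 ≤ (l 1 - l 0) ^ 2 * x 0) ∧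
        (∀ j, 1 ≤ j → j ≤ s →
          z j ≤ (l (j + 1) - l j) ^ 2 * x j / 4 ∧
          (z j) ^ 2 + (l (j + 1) - l j) ^ 2 * (l j) ^ 2 * (x j) ^ 2 +
              2 * (l (j + 1) - l j) * l j * x j * z j ≤ (l (j + 1) - l j) ^ 2 * x j) ∧
        y = ∑ j ∈ Finset.range (s + 1), z j} with hS_def
  -- constraint 3
  have hC3 : ∀ j < s, (d:ℝ) - ∑ k ∈ Finset.range (j + 1), x k ≤ (1 / l (j + 1)) ^ 2 := by
    intro j hj
    have hlpos : 0 < l (j + 1) := NuqAux.lev_pos hl (by omega) (by omega)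
    set T := Finset.univ.filter (fun i : Fin d => ¬ J i ≤ j) with hT_def
    have hsplit : ∑ k ∈ Finset.range (j + 1), x k
        = (((Finset.univ.filter (fun i : Fin d => J i ≤ j)).card : ℕ) : ℝ) := by
      have hmaps2 : ∀ i ∈ Finset.univ.filter (fun i : Fin d => J i ≤ j),
          J i ∈ Finset.range (j + 1) :=
        fun i hi => Finset.mem_range.mpr (Nat.lt_succ_of_le (Finset.mem_filter.mp hi).2)
      have h1 := Finset.card_eq_sum_card_fiberwise hmaps2
      have h2 : ∀ k ∈ Finset.range (j + 1),
          ((Finset.univ.filter (fun i : Fin d => J i ≤ j)).filter (fun i => J i = k))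
            = Finset.univ.filter (fun i : Fin d => J i = k) := by
        intro k hk
        have hk' : k ≤ j := Nat.lt_succ_iff.mp (Finset.mem_range.mp hk)
        rw [Finset.filter_filter]
        apply Finset.filter_congr
        intro i _
        constructor
        · exact fun h => h.2
        · exact fun h => ⟨h ▸ hk', h⟩
      rw [hx_def, ← Nat.cast_sum]
      congr 1
      rw [h1]
      exact Finset.sum_congr rfl (fun k hk => by rw [h2 k hk])
    have hcardsplit : ((Finset.univ.filter (fun i : Fin d => J i ≤ j)).card : ℝ)
        + (T.card : ℝ) = (d : ℝ) := by
      have h := Finset.card_filter_add_card_filter_not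
        (s := (Finset.univ : Finset (Fin d))) (p := fun i => J i ≤ j)
      rw [hT_def]
      push_cast [h]
      rw [← Nat.cast_add]
      push_cast [h]
      simp [Finset.card_univ]
    have hTbound : (T.card : ℝ) * l (j + 1) ^ 2 ≤ 1 := by
      have hle : ∀ i ∈ T, l (j + 1) ^ 2 ≤ (r i) ^ 2 := by
        intro i hi
        have hJi : ¬ J i ≤ j := (Finset.mem_filter.mp hi).2
        have h1 : l (j + 1) ≤ l (J i) :=
          NuqAux.lev_mono hl (by omega) (by have := hJs i; omega)
        have h2 : l (J i) ≤ r i := NuqAux.l_levIdx_le hl (hr0 i)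
        nlinarith [hlpos]
      calc (T.card : ℝ) * l (j + 1) ^ 2 = ∑ _i ∈ T, l (j + 1) ^ 2 := by
            rw [Finset.sum_const, nsmul_eq_mul]
        _ ≤ ∑ i ∈ T, (r i) ^ 2 := Finset.sum_le_sum hle
        _ ≤ ∑ i, (r i) ^ 2 := Finset.sum_le_sum_of_subset_of_nonneg
            (Finset.subset_univ _) (fun i _ _ => sq_nonneg _)
        _ = 1 := hRsum
    have hdT : (d : ℝ) - ∑ k ∈ Finset.range (j + 1), x k = (T.card : ℝ) := by
      rw [hsplit]; linarith [hcardsplit]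
    rw [hdT, div_pow, one_pow, le_div_iff₀ (by positivity : (0:ℝ) < l (j + 1) ^ 2)]
    exact hTbound
  -- membership of the objective value
  have hmem : (∑ i, V i) ∈ S := by
    rw [hS_def]
    refine ⟨x, z, fun j _ => hx0 j, le_of_eq hxsum, hC3, ?_, ?_, ?_, ?_⟩
    · have h := hz_le 0
      simpa [hτ_def] using h
    · have h := hkey 0 (Nat.zero_le s)
      simp only [hτ_def, hl.1, zero_add, mul_zero, zero_mul, add_zero, sub_zero] at h
      rw [hl.1, sub_zero]
      exact h
    · intro j h1 h2
      constructor
      · have h := hz_le j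
        simpa [hτ_def] using h
      · have h := hkey j h2
        simp only [hτ_def] at h
        calc (z j) ^ 2 + (l (j + 1) - l j) ^ 2 * (l j) ^ 2 * (x j) ^ 2 +
              2 * (l (j + 1) - l j) * l j * x j * z j
            = (z j + (l (j + 1) - l j) * l j * x j) ^ 2 := by ring
          _ ≤ (l (j + 1) - l j) ^ 2 * x j := h
    · rw [hz_def]
      exact (Finset.sum_fiberwise_of_maps_to hmaps V).symm
  -- boundedness of the feasible set
  have hBdd : BddAbove S := by
    refine ⟨∑ j ∈ Finset.range (s + 1), τ j ^ 2 * d / 4, ?_⟩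
    rintro y ⟨x', z', hx0', hxsum', _, hz00, _, hzj', rfl⟩
    apply Finset.sum_le_sum
    intro j hj
    have hjs : j ≤ s := Nat.lt_succ_iff.mp (Finset.mem_range.mp hj)
    have hxj : x' j ≤ (d : ℝ) := by
      calc x' j ≤ ∑ k ∈ Finset.range (s + 1), x' k :=
            Finset.single_le_sum
              (fun k hk => hx0' k (Nat.lt_succ_iff.mp (Finset.mem_range.mp hk))) hj
        _ ≤ (d : ℝ) := hxsum'
    have hzj : z' j ≤ τ j ^ 2 * x' j / 4 := by
      rcases Nat.eq_zero_or_pos j with rfl | hjpos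
      · simpa [hτ_def] using hz00
      · simpa [hτ_def] using (hzj' j hjpos hjs).1
    calc z' j ≤ τ j ^ 2 * x' j / 4 := hzj
      _ ≤ τ j ^ 2 * d / 4 := by gcongr
  -- conclusion
  rw [hEint, mul_comm]
  exact mul_le_mul_of_nonneg_right (le_csSup hBdd hmem) (sq_nonneg _)
end
end
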